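/- Let P₀ and P₁ be orthogonal projections on C^d. Then there exists an orthogonal decomposition C^d = ⊕_{i=1}^m H_i with dim H_i ≤ 2 for all i, such that each H_i is invariant under both P₀ and P₁ (equivalently, P₀ = Σ_i Π_i P₀ Π_i and P₁ = Σ_i Π_i P₁ Π_i where Π_i projects onto H_i). -/

import Mathlib

open Module Submodule LinearMap

variable {E : Type*} [NormedAddCommGroup E] [InnerProductSpace ℂ E] [FiniteDimensional ℂ E]

lemma halmos_aux (p q : Module.End ℂ E) (hp : p.IsSymmetric) (hq : q.IsSymmetric)
    (hp2 : p * p = p) (hq2 : q * q = q) :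
    ∀ (n : ℕ) (V : Submodule ℂ E), Module.finrank ℂ V = n →
      (∀ x ∈ V, p x ∈ V) → (∀ x ∈ V, q x ∈ V) →
      ∃ (m : ℕ) (H : Fin m → Submodule ℂ E),
        (∀ i, Module.finrank ℂ (H i) ≤ 2) ∧
        (∀ i, ∀ x ∈ H i, p x ∈ H i) ∧
        (∀ i, ∀ x ∈ H i, q x ∈ H i) ∧
        (∀ i j, i ≠ j → H i ≤ (H j)ᗮ) ∧
        (⨆ i, H i) = V := by
  intro n
  induction n using Nat.strong_induction_on with
  | _ n IH =>
  intro V hVn hpV hqV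
  by_cases hV : V = ⊥
  · exact ⟨0, Fin.elim0, fun i => i.elim0, fun i => i.elim0, fun i => i.elim0,
      fun i => i.elim0, by rw [hV]; exact iSup_of_empty _⟩
  -- find a nonzero vector u in V with p u = μ • u, μ ∈ {0, 1}
  obtain ⟨x, hxV, hx0⟩ := Submodule.ne_bot_iff V |>.mp hV
  have hppx : p (p x) = p x := by
    have := DFunLike.congr_fun hp2 x
    simpa [Module.End.mul_apply] using this
  obtain ⟨μ, hμ01, u, huV, hu0, hpu⟩ :
      ∃ (μ : ℂ), (μ = 0 ∨ μ = 1) ∧ ∃ u ∈ V, u ≠ 0 ∧ p u = μ • u := by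
    by_cases hpx : p x = 0
    · exact ⟨0, Or.inl rfl, x, hxV, hx0, by simp [hpx]⟩
    · exact ⟨1, Or.inr rfl, p x, hpV x hxV, hpx, by simp [hppx]⟩
  -- the auxiliary operator B
  set B : Module.End ℂ E := p * q * p + (1 - p) * q * (1 - p) with hBdef
  have h1 : p * (1 - p) = 0 := by rw [mul_sub, mul_one, hp2, sub_self]
  have h2 : (1 - p) * p = 0 := by rw [sub_mul, one_mul, hp2, sub_self]
  have hcomm : p * B = B * p := by
    have e1 : p * B = p * q * p := by
      have ha : p * ((1 - p) * q * (1 - p)) = p * (1 - p) * (q * (1 - p)) := by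
        rw [mul_assoc p (1 - p) (q * (1 - p)), mul_assoc (1 - p) q (1 - p)]
      have hb : p * (p * q * p) = p * q * p := by
        rw [← mul_assoc p (p * q) p, ← mul_assoc p p q, hp2]
      rw [hBdef, mul_add, ha, h1, zero_mul, add_zero, hb]
    have e2 : B * p = p * q * p := by
      rw [hBdef, add_mul, mul_assoc (p * q) p p, hp2, mul_assoc ((1 - p) * q) (1 - p) p, h2,
        mul_zero, add_zero]
    rw [e1, e2]
  -- the eigenspace piece
  set U : Submodule ℂ E := V ⊓ LinearMap.ker (p - μ • (1 : Module.End ℂ E)) with hUdef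
  have hmemU : ∀ y, y ∈ U ↔ y ∈ V ∧ p y = μ • y := by
    intro y
    simp [hUdef, Submodule.mem_inf, LinearMap.mem_ker, LinearMap.sub_apply, LinearMap.smul_apply, one_apply,
      Module.End.one_apply, sub_eq_zero]
  have hBV : ∀ y ∈ V, B y ∈ V := by
    intro y hy
    have : B y = p (q (p y)) + (q (y - p y) - p (q (y - p y))) := by
      simp [hBdef, Module.End.mul_apply, LinearMap.sub_apply, Module.End.one_apply]
    rw [this]
    exact add_mem (hpV _ (hqV _ (hpV _ hy)))
      (sub_mem (hqV _ (sub_mem hy (hpV _ hy))) (hpV _ (hqV _ (sub_mem hy (hpV _ hy)))))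
  have hBU : ∀ y ∈ U, B y ∈ U := by
    intro y hy
    rw [hmemU] at hy ⊢
    refine ⟨hBV y hy.1, ?_⟩
    have : p (B y) = B (p y) := by
      have := DFunLike.congr_fun hcomm y
      simpa [Module.End.mul_apply] using this
    rw [this, hy.2, map_smul]
  have hUne : U ≠ ⊥ := by
    refine Submodule.ne_bot_iff U |>.mpr ⟨u, ?_, hu0⟩
    rw [hmemU]; exact ⟨huV, hpu⟩
  haveI : Nontrivial U := Submodule.nontrivial_iff_ne_bot.mpr hUne
  -- eigenvector of B restricted to U
  set Bres : Module.End ℂ U := B.restrict hBU with hBres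
  obtain ⟨lam, hlam⟩ := Module.End.exists_eigenvalue Bres
  obtain ⟨vv, hvv⟩ := hlam.exists_hasEigenvector
  set v : E := (vv : E) with hvdef
  have hvU : v ∈ U := vv.2
  have hvV : v ∈ V := ((hmemU v).mp hvU).1
  have hpv : p v = μ • v := ((hmemU v).mp hvU).2
  have hv0 : v ≠ 0 := fun h => hvv.right (Subtype.coe_injective (by simpa [hvdef] using h))
  have hBv : B v = lam • v := by
    have := hvv.apply_eq_smul
    have := congrArg (Subtype.val) this
    simpa [hBres, LinearMap.restrict_coe_apply] using this
  -- the ≤ 2-dimensional invariant subspace W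
  set W : Submodule ℂ E := span ℂ {v, q v} with hWdef
  have hvW : v ∈ W := subset_span (by simp)
  have hqvW : q v ∈ W := subset_span (by simp)
  have hWV : W ≤ V := by
    rw [hWdef, span_le]
    rintro y hy
    simp only [Set.mem_insert_iff, Set.mem_singleton_iff] at hy
    rcases hy with rfl | rfl
    · exact hvV
    · exact hqV _ hvV
  have hqqv : q (q v) = q v := by
    have := DFunLike.congr_fun hq2 v
    simpa [Module.End.mul_apply] using this
  have hpqv : p (q v) ∈ W := by
    have hBveq : B v = p (q (p v)) + (q (v - p v) - p (q (v - p v))) := by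
      simp [hBdef, Module.End.mul_apply, LinearMap.sub_apply, Module.End.one_apply]
    rcases hμ01 with h0 | h1
    · have hpv0 : p v = 0 := by rw [hpv, h0, zero_smul]
      have : lam • v = q v - p (q v) := by
        rw [← hBv, hBveq, hpv0]; simp
      have hgoal : p (q v) = q v - lam • v := by
        rw [this]; abel
      rw [hgoal]
      exact sub_mem hqvW (smul_mem _ _ hvW)
    · have hpv1 : p v = v := by rw [hpv, h1, one_smul]
      have : lam • v = p (q v) := by
        rw [← hBv, hBveq, hpv1]; simp
      rw [← this]
      exact smul_mem _ _ hvW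
  have hWp : ∀ y ∈ W, p y ∈ W := by
    intro y hy
    induction hy using Submodule.span_induction with
    | mem z hz =>
      simp only [Set.mem_insert_iff, Set.mem_singleton_iff] at hz
      rcases hz with rfl | rfl
      · rw [hpv]; exact smul_mem _ _ hvW
      · exact hpqv
    | zero => simp
    | add a b _ _ ha hb => rw [map_add]; exact add_mem ha hb
    | smul c a _ ha => rw [map_smul]; exact smul_mem _ _ ha
  have hWq : ∀ y ∈ W, q y ∈ W := by
    intro y hy
    induction hy using Submodule.span_induction with
    | mem z hz =>
      simp only [Set.mem_insert_iff, Set.mem_singleton_iff] at hz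
      rcases hz with rfl | rfl
      · exact hqvW
      · rw [hqqv]; exact hqvW
    | zero => simp
    | add a b _ _ ha hb => rw [map_add]; exact add_mem ha hb
    | smul c a _ ha => rw [map_smul]; exact smul_mem _ _ ha
  have hW2 : Module.finrank ℂ W ≤ 2 := by
    classical
    have h := finrank_span_finset_le_card (R := ℂ) ({v, q v} : Finset E)
    simp only [Set.finrank, Finset.coe_insert, Finset.coe_singleton] at h
    have hset : (↑({v, q v} : Finset E) : Set E) = {v, q v} := by simp
    rw [hset] at h
    exact (hWdef ▸ h).trans ((Finset.card_insert_le _ _).trans (by simp))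
  have hW0 : W ≠ ⊥ := fun h => hv0 (by simpa [h] using hvW)
  -- the orthogonal complement piece
  set V' : Submodule ℂ E := Wᗮ ⊓ V with hV'def
  have hV'p : ∀ y ∈ V', p y ∈ V' := by
    intro y hy
    rw [hV'def, Submodule.mem_inf] at hy ⊢
    refine ⟨?_, hpV y hy.2⟩
    rw [Submodule.mem_orthogonal] at hy ⊢
    intro w hw
    rw [← hp w y]
    exact hy.1 (p w) (hWp w hw)
  have hV'q : ∀ y ∈ V', q y ∈ V' := by
    intro y hy
    rw [hV'def, Submodule.mem_inf] at hy ⊢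
    refine ⟨?_, hqV y hy.2⟩
    rw [Submodule.mem_orthogonal] at hy ⊢
    intro w hw
    rw [← hq w y]
    exact hy.1 (q w) (hWq w hw)
  have hrk : Module.finrank ℂ W + Module.finrank ℂ V' = Module.finrank ℂ V :=
    Submodule.finrank_add_inf_finrank_orthogonal hWV
  have hWpos : 0 < Module.finrank ℂ W := by
    haveI : Nontrivial W := Submodule.nontrivial_iff_ne_bot.mpr hW0
    exact Module.finrank_pos
  have hlt : Module.finrank ℂ V' < n := by omega
  obtain ⟨m', H', h2', hp', hq', horth', hsup'⟩ :=
    IH (Module.finrank ℂ V') hlt V' rfl hV'p hV'q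
  have hH'W : ∀ j, H' j ≤ Wᗮ := fun j => (le_iSup H' j).trans (hsup' ▸ inf_le_left)
  refine ⟨m' + 1, Fin.cons W H', ?_, ?_, ?_, ?_, ?_⟩
  · intro i
    rcases Fin.eq_zero_or_eq_succ i with rfl | ⟨i', rfl⟩
    · exact hW2
    · exact h2' i'
  · intro i
    rcases Fin.eq_zero_or_eq_succ i with rfl | ⟨i', rfl⟩
    · simpa using hWp
    · simpa using hp' i'
  · intro i
    rcases Fin.eq_zero_or_eq_succ i with rfl | ⟨i', rfl⟩
    · simpa using hWq
    · simpa using hq' i'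
  · intro i j hij
    rcases Fin.eq_zero_or_eq_succ i with rfl | ⟨i', rfl⟩ <;>
      rcases Fin.eq_zero_or_eq_succ j with rfl | ⟨j', rfl⟩
    · exact absurd rfl hij
    · simpa using (Submodule.le_orthogonal_orthogonal W).trans
        (Submodule.orthogonal_le (hH'W j'))
    · simpa using hH'W i'
    · have : i' ≠ j' := fun h => hij (by rw [h])
      simpa using horth' i' j' this
  · have hcons : (⨆ i, Fin.cons W H' i) = W ⊔ ⨆ i, H' i := by
      apply le_antisymm
      · refine iSup_le fun i => ?_
        rcases Fin.eq_zero_or_eq_succ i with rfl | ⟨i', rfl⟩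
        · simp
        · simp only [Fin.cons_succ]
          exact le_sup_of_le_right (le_iSup H' i')
      · exact sup_le (le_iSup_of_le 0 (by simp))
          (iSup_le fun j => le_iSup_of_le j.succ (by simp))
    rw [hcons, hsup', hV'def]
    exact Submodule.sup_orthogonal_inf_of_hasOrthogonalProjection hWV

lemma myToEuclideanLin_mul {d : ℕ} (A B : Matrix (Fin d) (Fin d) ℂ) :
    Matrix.toEuclideanLin (A * B) =
      (Matrix.toEuclideanLin A) ∘ₗ (Matrix.toEuclideanLin B) := by
  apply LinearMap.ext
  intro x
  simp [Matrix.toEuclideanLin_apply, Matrix.mulVec_mulVec]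

lemma myToEuclideanLin_one {d : ℕ} :
    Matrix.toEuclideanLin (1 : Matrix (Fin d) (Fin d) ℂ) = LinearMap.id := by
  apply LinearMap.ext
  intro x
  simp [Matrix.toEuclideanLin_apply]

open Matrix

/-- Halmos two-projections decomposition: for orthogonal projections `P₀, P₁`
on `ℂ^d` there is a decomposition of the space into mutually orthogonal
subspaces of dimension at most 2, each invariant under both projections. -/
theorem two_projections_decomposition {d : ℕ}
    (P₀ P₁ : Matrix (Fin d) (Fin d) ℂ)
    (hP₀ : P₀ᴴ = P₀) (hP₀2 : P₀ * P₀ = P₀)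
    (hP₁ : P₁ᴴ = P₁) (hP₁2 : P₁ * P₁ = P₁) :
    ∃ (m : ℕ) (Pj : Fin m → Matrix (Fin d) (Fin d) ℂ),
      (∀ i, (Pj i)ᴴ = Pj i ∧ Pj i * Pj i = Pj i ∧ (Pj i).rank ≤ 2) ∧
      (∀ i j, i ≠ j → Pj i * Pj j = 0) ∧
      (∑ i, Pj i) = 1 ∧
      P₀ = ∑ i, Pj i * P₀ * Pj i ∧
      P₁ = ∑ i, Pj i * P₁ * Pj i := by
  set p : Module.End ℂ (EuclideanSpace ℂ (Fin d)) := Matrix.toEuclideanLin P₀ with hpdef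
  set q : Module.End ℂ (EuclideanSpace ℂ (Fin d)) := Matrix.toEuclideanLin P₁ with hqdef
  have hp : p.IsSymmetric := Matrix.isHermitian_iff_isSymmetric.mp hP₀
  have hq : q.IsSymmetric := Matrix.isHermitian_iff_isSymmetric.mp hP₁
  have hp2 : p * p = p := by
    rw [hpdef, Module.End.mul_eq_comp, ← myToEuclideanLin_mul, hP₀2]
  have hq2 : q * q = q := by
    rw [hqdef, Module.End.mul_eq_comp, ← myToEuclideanLin_mul, hP₁2]
  obtain ⟨m, H, h2, hpH, hqH, horth, hsup⟩ :=
    halmos_aux p q hp hq hp2 hq2 (Module.finrank ℂ (⊤ : Submodule ℂ (EuclideanSpace ℂ (Fin d))))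
      ⊤ rfl (fun x _ => trivial) (fun x _ => trivial)
  -- the orthogonal projections onto the pieces, as linear maps
  set π : Fin m → Module.End ℂ (EuclideanSpace ℂ (Fin d)) :=
    fun i => ((H i).subtypeL ∘L orthogonalProjection (H i) :
      EuclideanSpace ℂ (Fin d) →ₗ[ℂ] EuclideanSpace ℂ (Fin d)) with hπdef
  have hπ_apply : ∀ i x, π i x = (orthogonalProjection (H i) x : EuclideanSpace ℂ (Fin d)) := by
    intro i x; rfl
  have hπ_mem : ∀ i x, π i x ∈ H i := fun i x => (orthogonalProjection (H i) x).2
  have hπ_fix : ∀ i, ∀ x ∈ H i, π i x = x := by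
    intro i x hx
    rw [hπ_apply]
    exact Submodule.starProjection_eq_self_iff.mpr hx
  have hπ_zero : ∀ i j, i ≠ j → ∀ x ∈ H j, π i x = 0 := by
    intro i j hij x hx
    rw [hπ_apply]
    have : x ∈ (H i)ᗮ := horth j i (fun h => hij h.symm) hx
    rw [Submodule.orthogonalProjectionOnto_apply_of_mem_orthogonal this]
    simp
  -- completeness: the projections sum to the identity
  have hsum_id : ∀ x, (∑ i, π i) x = x := by
    intro x
    have hx : x ∈ ⨆ i, H i := by rw [hsup]; trivial
    refine Submodule.iSup_induction (motive := fun y => (∑ i, π i) y = y) H hx ?_ ?_ ?_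
    · intro j y hy
      rw [LinearMap.sum_apply]
      rw [Finset.sum_eq_single j]
      · exact hπ_fix j y hy
      · intro i _ hij
        exact hπ_zero i j hij y hy
      · intro h
        exact absurd (Finset.mem_univ j) h
    · simp
    · intro y z hy hz
      rw [map_add, hy, hz]
  -- back to matrices
  set Pj : Fin m → Matrix (Fin d) (Fin d) ℂ :=
    fun i => Matrix.toEuclideanLin.symm (π i) with hPjdef
  have hPjπ : ∀ i, Matrix.toEuclideanLin (Pj i) = π i := by
    intro i; rw [hPjdef]; exact Matrix.toEuclideanLin.apply_symm_apply _
  have hmul : ∀ i (A : Matrix (Fin d) (Fin d) ℂ),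
      Matrix.toEuclideanLin (Pj i * A) = π i ∘ₗ Matrix.toEuclideanLin A := by
    intro i A; rw [myToEuclideanLin_mul, hPjπ]
  have hmul' : ∀ i (A : Matrix (Fin d) (Fin d) ℂ),
      Matrix.toEuclideanLin (A * Pj i) = Matrix.toEuclideanLin A ∘ₗ π i := by
    intro i A; rw [myToEuclideanLin_mul, hPjπ]
  have hπsym : ∀ i, (π i).IsSymmetric := by
    intro i
    rw [hπdef]
    exact (H i).starProjection_isSymmetric
  have hπ2 : ∀ i, π i ∘ₗ π i = π i := by
    intro i
    apply LinearMap.ext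
    intro x
    exact hπ_fix i (π i x) (hπ_mem i x)
  refine ⟨m, Pj, ?_, ?_, ?_, ?_, ?_⟩
  · intro i
    refine ⟨Matrix.isHermitian_iff_isSymmetric.mpr (by rw [hPjπ]; exact hπsym i), ?_, ?_⟩
    · apply Matrix.toEuclideanLin.injective
      rw [hmul' i (Pj i), hPjπ, hπ2]
    · -- rank
      have hr : (Pj i).rank = Module.finrank ℂ (LinearMap.range (π i)) := by
        rw [Matrix.rank_eq_finrank_range_toLin (Pj i)
          (PiLp.basisFun 2 ℂ (Fin d)) (PiLp.basisFun 2 ℂ (Fin d))]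
        rw [← Matrix.toEuclideanLin_eq_toLin, hPjπ]
      have hrange : LinearMap.range (π i) = H i := by
        apply le_antisymm
        · rintro y ⟨x, rfl⟩
          exact hπ_mem i x
        · intro y hy
          exact ⟨y, hπ_fix i y hy⟩
      rw [hr, hrange]
      exact h2 i
  · intro i j hij
    apply Matrix.toEuclideanLin.injective
    rw [hmul' j (Pj i), hPjπ, map_zero]
    apply LinearMap.ext
    intro x
    simp only [LinearMap.comp_apply, LinearMap.zero_apply]
    exact hπ_zero i j hij (π j x) (hπ_mem j x)
  · apply Matrix.toEuclideanLin.injective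
    rw [map_sum, myToEuclideanLin_one]
    simp only [hPjπ]
    exact LinearMap.ext hsum_id
  · apply Matrix.toEuclideanLin.injective
    rw [map_sum]
    apply LinearMap.ext
    intro x
    have : ∀ i, Matrix.toEuclideanLin (Pj i * P₀ * Pj i) x = p (π i x) := by
      intro i
      rw [hmul' i (Pj i * P₀), hmul i P₀]
      simp only [LinearMap.comp_apply]
      exact hπ_fix i (p (π i x)) (hpH i (π i x) (hπ_mem i x))
    rw [LinearMap.sum_apply]
    simp only [this]
    have : ∑ i, p (π i x) = p ((∑ i, π i) x) := by
      rw [LinearMap.sum_apply, map_sum]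
    rw [this, hsum_id x]
  · apply Matrix.toEuclideanLin.injective
    rw [map_sum]
    apply LinearMap.ext
    intro x
    have : ∀ i, Matrix.toEuclideanLin (Pj i * P₁ * Pj i) x = q (π i x) := by
      intro i
      rw [hmul' i (Pj i * P₁), hmul i P₁]
      simp only [LinearMap.comp_apply]
      exact hπ_fix i (q (π i x)) (hqH i (π i x) (hπ_mem i x))
    rw [LinearMap.sum_apply]
    simp only [this]
    have : ∑ i, q (π i x) = q ((∑ i, π i) x) := by
      rw [LinearMap.sum_apply, map_sum]
    rw [this, hsum_id x]
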